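/- Let X be compact metrizable totally disconnected, h a homeomorphism, and (Pₙ) an h-refined sequence of partitions. Suppose Z'' ∈ P_{n+2}, Z' ∈ P_{n+1}, Z ∈ Pₙ with n even satisfy Z'' ⊆ Z' ⊆ Z. Then there exist unique Z'₁ ∈ P_{n+1} and Z₁ ∈ Pₙ with Z'' ⊆ h⁻¹(Z'₁) and Z'₁ ⊆ h(Z₁), and moreover Z₁ = Z. -/
import Mathlib


def IsClopenPartition {X : Type*} [TopologicalSpace X] (P : Set (Set X)) : Prop :=
  P.Finite ∧ (∀ Z ∈ P, Z.Nonempty ∧ IsClopen Z) ∧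
    P.PairwiseDisjoint id ∧ ⋃₀ P = Set.univ

def Refines {X : Type*} (Q P : Set (Set X)) : Prop :=
  ∀ Z ∈ Q, ∃ W ∈ P, Z ⊆ W

lemma block_eq {X : Type*} [TopologicalSpace X] {P : Set (Set X)}
    (hp : IsClopenPartition P) {A B : Set X} (hA : A ∈ P) (hB : B ∈ P)
    {x : X} (hxA : x ∈ A) (hxB : x ∈ B) : A = B := by
  by_contra hne
  exact Set.disjoint_left.mp (hp.2.2.1 hA hB hne) hxA hxB

theorem stmt15 {X : Type*} [TopologicalSpace X] [CompactSpace X]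
    [TopologicalSpace.MetrizableSpace X] [TotallyDisconnectedSpace X]
    (h : X ≃ₜ X) (P : ℕ → Set (Set X))
    (hpart : ∀ n, IsClopenPartition (P n))
    (href : ∀ n, Refines (P (n + 1)) (P n) ∧
      Refines (P (n + 1)) (Set.image (⇑h) '' P n) ∧
      Refines (P (n + 1)) (Set.image (⇑h.symm) '' P n))
    (n : ℕ) (hn : Even n) (Z'' Z' Z : Set X)
    (h2 : Z'' ∈ P (n + 2)) (h1 : Z' ∈ P (n + 1)) (h0 : Z ∈ P n)
    (hsub2 : Z'' ⊆ Z') (hsub1 : Z' ⊆ Z) :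
    (∃! W : Set X × Set X, W.1 ∈ P (n + 1) ∧ W.2 ∈ P n ∧
      Z'' ⊆ ⇑h ⁻¹' W.1 ∧ W.1 ⊆ ⇑h '' W.2) ∧
    ∀ W1 W2 : Set X, W1 ∈ P (n + 1) → W2 ∈ P n →
      Z'' ⊆ ⇑h ⁻¹' W1 → W1 ⊆ ⇑h '' W2 → W2 = Z := by
  -- find W1
  obtain ⟨_, ⟨W1, hW1, rfl⟩, hZ''W1⟩ := (href (n + 1)).2.2 Z'' h2
  have hZ''pre : Z'' ⊆ ⇑h ⁻¹' W1 := by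
    intro x hx
    obtain ⟨y, hy, hxy⟩ := hZ''W1 hx
    simpa [← hxy] using hy
  obtain ⟨_, ⟨W2, hW2, rfl⟩, hW1W2⟩ := (href n).2.1 W1 hW1
  obtain ⟨x, hx⟩ := ((hpart (n + 2)).2.1 Z'' h2).1
  obtain ⟨y, hy⟩ := ((hpart (n + 1)).2.1 W1 hW1).1
  have key : ∀ W1' W2' : Set X, W1' ∈ P (n + 1) → W2' ∈ P n →
      Z'' ⊆ ⇑h ⁻¹' W1' → W1' ⊆ ⇑h '' W2' → W1' = W1 ∧ W2' = W2 := by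
    intro W1' W2' hm1 hm2 hs1 hs2
    have e1 : W1' = W1 := block_eq (hpart (n + 1)) hm1 hW1 (hs1 hx) (hZ''pre hx)
    subst e1
    obtain ⟨z, hz, hzy⟩ := hs2 hy
    obtain ⟨z', hz', hz'y⟩ := hW1W2 hy
    have : z = z' := h.injective (hzy.trans hz'y.symm)
    exact ⟨rfl, block_eq (hpart n) hm2 hW2 hz (this ▸ hz')⟩
  constructor
  · refine ⟨(W1, W2), ⟨hW1, hW2, hZ''pre, hW1W2⟩, ?_⟩
    rintro ⟨A, B⟩ ⟨hA, hB, hsA, hsB⟩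
    obtain ⟨e1, e2⟩ := key A B hA hB hsA hsB
    simp [e1, e2]
  · intro A B hA hB hsA hsB
    have hxB : x ∈ B := by
      obtain ⟨z, hz, hzx⟩ := hsB (hsA hx)
      have : z = x := h.injective hzx
      exact this ▸ hz
    exact block_eq (hpart n) hB h0 hxB (hsub1 (hsub2 hx))
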